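/- arXiv:2407.06594 — 2 statements merged into one kernel-verified Lean document; each statement's English description precedes it below -/
import Mathlib

section
/- Let σ be a full-rank density matrix and ℒρ = −i[H,ρ] + VρV† − ½{V†V, ρ} a Lindbladian such that ‖σ^{1/4} H σ^{-1/4}‖ ≤ Λ, ‖σ^{1/4} V σ^{-1/4}‖² ≤ Λ, and ‖σ^{1/4} V† σ^{-1/4}‖² ≤ Λ. Then for every ρ, ‖ℒρ‖_{σ,−1/2} ≤ 5Λ ‖ρ‖_{σ,−1/2}, where ‖X‖_{σ,−1/2} := ‖σ^{−1/4} X σ^{−1/4}‖_F. -/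
open Matrix
open scoped ComplexOrder

set_option synthInstance.maxHeartbeats 1000000
set_option maxHeartbeats 1000000
set_option linter.unusedVariables false

variable {N : ℕ}

/-- The Frobenius norm `‖M‖_F = √Tr(M†M)`. -/
noncomputable def frobNorm (M : Matrix (Fin N) (Fin N) ℂ) : ℝ :=
  Real.sqrt ((Mᴴ * M).trace.re)

/-- The operator (spectral) norm of a matrix, via its action on `EuclideanSpace`. -/
noncomputable def specNorm (M : Matrix (Fin N) (Fin N) ℂ) : ℝ :=
  ‖Matrix.toEuclideanCLM (𝕜 := ℂ) M‖

/-- The Lindbladian `ℒρ = −i[H,ρ] + VρV† − ½{V†V, ρ}`. -/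
noncomputable def lindbladian (H V ρ : Matrix (Fin N) (Fin N) ℂ) :
    Matrix (Fin N) (Fin N) ℂ :=
  -Complex.I • (H * ρ - ρ * H) + V * ρ * Vᴴ - (1 / 2 : ℂ) • (Vᴴ * V * ρ + ρ * (Vᴴ * V))

lemma frobNorm_eq_sum (M : Matrix (Fin N) (Fin N) ℂ) :
    (Mᴴ * M).trace.re = ∑ p : Fin N × Fin N, ‖M p.1 p.2‖ ^ 2 := by
  have h : ∀ z : ℂ, (star z * z).re = ‖z‖ ^ 2 := by
    intro z
    simp only [Complex.star_def, Complex.mul_re, Complex.conj_re, Complex.conj_im,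
      Complex.sq_norm, Complex.normSq_apply]
    ring
  rw [Fintype.sum_prod_type]
  simp only [Matrix.trace, Matrix.diag, Matrix.mul_apply, Matrix.conjTranspose_apply,
    Complex.re_sum, h]
  rw [Finset.sum_comm]

noncomputable def frobE (M : Matrix (Fin N) (Fin N) ℂ) : EuclideanSpace ℂ (Fin N × Fin N) :=
  (WithLp.equiv 2 _).symm (fun p => M p.1 p.2)

lemma frobNorm_eq_norm (M : Matrix (Fin N) (Fin N) ℂ) : frobNorm M = ‖frobE M‖ := by
  rw [frobNorm, frobNorm_eq_sum, EuclideanSpace.norm_eq]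
  simp [frobE, Real.sqrt_eq_rpow]

lemma frobNorm_nonneg (M : Matrix (Fin N) (Fin N) ℂ) : 0 ≤ frobNorm M :=
  Real.sqrt_nonneg _

lemma frobNorm_add_le (X Y : Matrix (Fin N) (Fin N) ℂ) :
    frobNorm (X + Y) ≤ frobNorm X + frobNorm Y := by
  simp only [frobNorm_eq_norm]
  have : frobE (X + Y) = frobE X + frobE Y := rfl
  rw [this]; exact norm_add_le _ _

lemma frobNorm_sub_le (X Y : Matrix (Fin N) (Fin N) ℂ) :
    frobNorm (X - Y) ≤ frobNorm X + frobNorm Y := by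
  simp only [frobNorm_eq_norm]
  have : frobE (X - Y) = frobE X - frobE Y := rfl
  rw [this]; exact norm_sub_le _ _

lemma frobNorm_smul (c : ℂ) (X : Matrix (Fin N) (Fin N) ℂ) :
    frobNorm (c • X) = ‖c‖ * frobNorm X := by
  simp only [frobNorm_eq_norm]
  have : frobE (c • X) = c • frobE X := rfl
  rw [this, norm_smul]

lemma frob_sq (M : Matrix (Fin N) (Fin N) ℂ) :
    frobNorm M ^ 2 = ∑ j, ∑ i, ‖M i j‖ ^ 2 := by
  rw [frobNorm, Real.sq_sqrt, frobNorm_eq_sum, Fintype.sum_prod_type]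
  · exact Finset.sum_comm
  · rw [frobNorm_eq_sum]
    positivity

lemma frobNorm_mul_le_left (X A : Matrix (Fin N) (Fin N) ℂ) :
    frobNorm (X * A) ≤ specNorm X * frobNorm A := by
  have hsq : frobNorm (X * A) ^ 2 ≤ (specNorm X * frobNorm A) ^ 2 := by
    rw [mul_pow, frob_sq, frob_sq, Finset.mul_sum]
    refine Finset.sum_le_sum fun j _ => ?_
    set v : EuclideanSpace ℂ (Fin N) := (WithLp.equiv 2 _).symm (fun i => A i j) with hv
    have h1 : Matrix.toEuclideanCLM (𝕜 := ℂ) X v =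
        (WithLp.equiv 2 _).symm (X.mulVec (fun i => A i j)) :=
      Matrix.toEuclideanCLM_toLp X _
    have h2 : ‖Matrix.toEuclideanCLM (𝕜 := ℂ) X v‖ ≤ specNorm X * ‖v‖ :=
      (Matrix.toEuclideanCLM (𝕜 := ℂ) X).le_opNorm v
    have h3 : ‖Matrix.toEuclideanCLM (𝕜 := ℂ) X v‖ ^ 2 ≤ (specNorm X * ‖v‖) ^ 2 := by
      have := norm_nonneg (Matrix.toEuclideanCLM (𝕜 := ℂ) X v)
      nlinarith
    have h4 : ‖Matrix.toEuclideanCLM (𝕜 := ℂ) X v‖ ^ 2 = ∑ i, ‖(X * A) i j‖ ^ 2 := by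
      rw [h1, EuclideanSpace.norm_eq, Real.sq_sqrt (by positivity)]
      refine Finset.sum_congr rfl fun i _ => ?_
      simp [Matrix.mulVec, Matrix.mul_apply, dotProduct, WithLp.equiv_symm_apply]
    have h5 : ‖v‖ ^ 2 = ∑ i, ‖A i j‖ ^ 2 := by
      rw [hv, EuclideanSpace.norm_eq, Real.sq_sqrt (by positivity)]
      rfl
    rw [← h4, ← h5]
    calc ‖Matrix.toEuclideanCLM (𝕜 := ℂ) X v‖ ^ 2 ≤ (specNorm X * ‖v‖) ^ 2 := h3
      _ = specNorm X ^ 2 * ‖v‖ ^ 2 := by ring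
  have h0 : 0 ≤ specNorm X * frobNorm A :=
    mul_nonneg (norm_nonneg _) (frobNorm_nonneg _)
  nlinarith [frobNorm_nonneg (X * A)]

lemma frobNorm_conjTranspose (M : Matrix (Fin N) (Fin N) ℂ) :
    frobNorm Mᴴ = frobNorm M := by
  rw [frobNorm, frobNorm, Matrix.conjTranspose_conjTranspose, Matrix.trace_mul_comm]

lemma specNorm_conjTranspose (M : Matrix (Fin N) (Fin N) ℂ) :
    specNorm Mᴴ = specNorm M := by
  rw [specNorm, specNorm, ← Matrix.star_eq_conjTranspose, map_star]
  rw [ContinuousLinearMap.star_eq_adjoint]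
  exact ContinuousLinearMap.adjoint.norm_map _

lemma frobNorm_mul_le_right (A X : Matrix (Fin N) (Fin N) ℂ) :
    frobNorm (A * X) ≤ frobNorm A * specNorm X := by
  have : frobNorm (A * X) = frobNorm (Xᴴ * Aᴴ) := by
    rw [← Matrix.conjTranspose_mul, frobNorm_conjTranspose]
  rw [this]
  calc frobNorm (Xᴴ * Aᴴ) ≤ specNorm Xᴴ * frobNorm Aᴴ := frobNorm_mul_le_left _ _
    _ = frobNorm A * specNorm X := by
        rw [specNorm_conjTranspose, frobNorm_conjTranspose]; ring

/-- Let `σ = s⁴` be a full-rank density matrix with positive-definite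
quarter power `s = σ^{1/4}`, and let `ℒρ = −i[H,ρ] + VρV† − ½{V†V,ρ}` with
`‖σ^{1/4} H σ^{-1/4}‖ ≤ Λ`, `‖σ^{1/4} V σ^{-1/4}‖² ≤ Λ`, `‖σ^{1/4} V† σ^{-1/4}‖² ≤ Λ`.
Then `‖ℒρ‖_{σ,−1/2} ≤ 5Λ ‖ρ‖_{σ,−1/2}` with `‖X‖_{σ,−1/2} = ‖σ^{−1/4} X σ^{−1/4}‖_F`. -/
theorem lindbladian_weighted_l2_bound
    (s σ H V : Matrix (Fin N) (Fin N) ℂ) (hs : s.PosDef)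
    (hσ : σ = s * s * s * s) (htr : σ.trace = 1)
    (hH : H.IsHermitian) (Λ : ℝ)
    (hHΛ : specNorm (s * H * s⁻¹) ≤ Λ)
    (hVΛ : specNorm (s * V * s⁻¹) ^ 2 ≤ Λ)
    (hVdΛ : specNorm (s * Vᴴ * s⁻¹) ^ 2 ≤ Λ)
    (ρ : Matrix (Fin N) (Fin N) ℂ) :
    frobNorm (s⁻¹ * lindbladian H V ρ * s⁻¹) ≤ 5 * Λ * frobNorm (s⁻¹ * ρ * s⁻¹) := by
  have hdet : IsUnit s.det := isUnit_iff_ne_zero.mpr (ne_of_gt hs.det_pos)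
  have hinv1 : s⁻¹ * s = 1 := Matrix.nonsing_inv_mul s hdet
  have hinv2 : s * s⁻¹ = 1 := Matrix.mul_nonsing_inv s hdet
  have hm1 : ∀ X : Matrix (Fin N) (Fin N) ℂ, s * (s⁻¹ * X) = X := by
    intro X; rw [← Matrix.mul_assoc, hinv2, Matrix.one_mul]
  have hm2 : ∀ X : Matrix (Fin N) (Fin N) ℂ, s⁻¹ * (s * X) = X := by
    intro X; rw [← Matrix.mul_assoc, hinv1, Matrix.one_mul]
  have hsH : sᴴ = s := hs.1
  have hsiH : (s⁻¹)ᴴ = s⁻¹ := hs.1.inv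
  set A := s⁻¹ * ρ * s⁻¹ with hA
  -- decomposition
  have hdecomp : s⁻¹ * lindbladian H V ρ * s⁻¹ =
      -Complex.I • ((s⁻¹ * H * s) * A - A * (s * H * s⁻¹))
        + (s⁻¹ * V * s) * (A * (s * Vᴴ * s⁻¹))
        - (1 / 2 : ℂ) • ((s⁻¹ * Vᴴ * s) * ((s⁻¹ * V * s) * A)
            + (A * (s * Vᴴ * s⁻¹)) * (s * V * s⁻¹)) := by
    simp only [lindbladian, hA, Matrix.mul_add, Matrix.add_mul, Matrix.mul_sub,
      Matrix.sub_mul, Matrix.mul_smul, Matrix.smul_mul, Matrix.mul_assoc, hm1, hm2]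
  -- spectral norm identities
  have e1 : specNorm (s⁻¹ * H * s) = specNorm (s * H * s⁻¹) := by
    rw [← specNorm_conjTranspose (s * H * s⁻¹)]
    congr 1
    rw [Matrix.conjTranspose_mul, Matrix.conjTranspose_mul, hsH, hsiH, hH.eq, Matrix.mul_assoc]
  have e2 : specNorm (s⁻¹ * V * s) = specNorm (s * Vᴴ * s⁻¹) := by
    rw [← specNorm_conjTranspose (s * Vᴴ * s⁻¹)]
    congr 1
    rw [Matrix.conjTranspose_mul, Matrix.conjTranspose_mul, hsH, hsiH,
      Matrix.conjTranspose_conjTranspose, Matrix.mul_assoc]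
  have e3 : specNorm (s⁻¹ * Vᴴ * s) = specNorm (s * V * s⁻¹) := by
    rw [← specNorm_conjTranspose (s * V * s⁻¹)]
    congr 1
    rw [Matrix.conjTranspose_mul, Matrix.conjTranspose_mul, hsH, hsiH, Matrix.mul_assoc]
  set a := specNorm (s * V * s⁻¹) with ha
  set b := specNorm (s * Vᴴ * s⁻¹) with hb
  set c := frobNorm A with hc
  have ha0 : 0 ≤ a := norm_nonneg _
  have hb0 : 0 ≤ b := norm_nonneg _
  have hc0 : 0 ≤ c := frobNorm_nonneg _
  have hΛ0 : 0 ≤ Λ := le_trans (sq_nonneg a) hVΛ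
  -- term bounds
  have t1 : frobNorm ((s⁻¹ * H * s) * A) ≤ Λ * c := by
    calc frobNorm ((s⁻¹ * H * s) * A) ≤ specNorm (s⁻¹ * H * s) * c := frobNorm_mul_le_left _ _
      _ ≤ Λ * c := by rw [e1]; exact mul_le_mul_of_nonneg_right hHΛ hc0
  have t2 : frobNorm (A * (s * H * s⁻¹)) ≤ Λ * c := by
    calc frobNorm (A * (s * H * s⁻¹)) ≤ c * specNorm (s * H * s⁻¹) := frobNorm_mul_le_right _ _
      _ ≤ c * Λ := mul_le_mul_of_nonneg_left hHΛ hc0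
      _ = Λ * c := mul_comm _ _
  have tAW : frobNorm (A * (s * Vᴴ * s⁻¹)) ≤ c * b := frobNorm_mul_le_right _ _
  have t3 : frobNorm ((s⁻¹ * V * s) * (A * (s * Vᴴ * s⁻¹))) ≤ b * (c * b) := by
    calc frobNorm ((s⁻¹ * V * s) * (A * (s * Vᴴ * s⁻¹)))
        ≤ specNorm (s⁻¹ * V * s) * frobNorm (A * (s * Vᴴ * s⁻¹)) := frobNorm_mul_le_left _ _
      _ ≤ b * (c * b) := by
          rw [e2]
          exact mul_le_mul_of_nonneg_left tAW hb0
  have tWA : frobNorm ((s⁻¹ * V * s) * A) ≤ b * c := by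
    calc frobNorm ((s⁻¹ * V * s) * A) ≤ specNorm (s⁻¹ * V * s) * c := frobNorm_mul_le_left _ _
      _ = b * c := by rw [e2]
  have t4 : frobNorm ((s⁻¹ * Vᴴ * s) * ((s⁻¹ * V * s) * A)) ≤ a * (b * c) := by
    calc frobNorm ((s⁻¹ * Vᴴ * s) * ((s⁻¹ * V * s) * A))
        ≤ specNorm (s⁻¹ * Vᴴ * s) * frobNorm ((s⁻¹ * V * s) * A) := frobNorm_mul_le_left _ _
      _ ≤ a * (b * c) := by rw [e3]; exact mul_le_mul_of_nonneg_left tWA ha0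
  have t5 : frobNorm ((A * (s * Vᴴ * s⁻¹)) * (s * V * s⁻¹)) ≤ (c * b) * a := by
    calc frobNorm ((A * (s * Vᴴ * s⁻¹)) * (s * V * s⁻¹))
        ≤ frobNorm (A * (s * Vᴴ * s⁻¹)) * a := frobNorm_mul_le_right _ _
      _ ≤ (c * b) * a := mul_le_mul_of_nonneg_right tAW ha0
  -- assemble
  rw [hdecomp]
  have step1 : frobNorm (-Complex.I • ((s⁻¹ * H * s) * A - A * (s * H * s⁻¹))) ≤ 2 * Λ * c := by
    rw [frobNorm_smul]
    have : ‖(-Complex.I : ℂ)‖ = 1 := by simp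
    rw [this, one_mul]
    calc frobNorm ((s⁻¹ * H * s) * A - A * (s * H * s⁻¹))
        ≤ frobNorm ((s⁻¹ * H * s) * A) + frobNorm (A * (s * H * s⁻¹)) := frobNorm_sub_le _ _
      _ ≤ Λ * c + Λ * c := add_le_add t1 t2
      _ = 2 * Λ * c := by ring
  have step2 : frobNorm ((1 / 2 : ℂ) • ((s⁻¹ * Vᴴ * s) * ((s⁻¹ * V * s) * A)
      + (A * (s * Vᴴ * s⁻¹)) * (s * V * s⁻¹))) ≤ a * b * c := by
    rw [frobNorm_smul]
    have h12 : ‖(1 / 2 : ℂ)‖ = 1 / 2 := by norm_num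
    rw [h12]
    have := add_le_add t4 t5
    have htri := frobNorm_add_le ((s⁻¹ * Vᴴ * s) * ((s⁻¹ * V * s) * A))
      ((A * (s * Vᴴ * s⁻¹)) * (s * V * s⁻¹))
    nlinarith [frobNorm_nonneg ((s⁻¹ * Vᴴ * s) * ((s⁻¹ * V * s) * A)
      + (A * (s * Vᴴ * s⁻¹)) * (s * V * s⁻¹))]
  calc frobNorm (-Complex.I • ((s⁻¹ * H * s) * A - A * (s * H * s⁻¹))
        + (s⁻¹ * V * s) * (A * (s * Vᴴ * s⁻¹))
        - (1 / 2 : ℂ) • ((s⁻¹ * Vᴴ * s) * ((s⁻¹ * V * s) * A)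
            + (A * (s * Vᴴ * s⁻¹)) * (s * V * s⁻¹)))
      ≤ frobNorm (-Complex.I • ((s⁻¹ * H * s) * A - A * (s * H * s⁻¹))
          + (s⁻¹ * V * s) * (A * (s * Vᴴ * s⁻¹)))
        + frobNorm ((1 / 2 : ℂ) • ((s⁻¹ * Vᴴ * s) * ((s⁻¹ * V * s) * A)
            + (A * (s * Vᴴ * s⁻¹)) * (s * V * s⁻¹))) := frobNorm_sub_le _ _
    _ ≤ (frobNorm (-Complex.I • ((s⁻¹ * H * s) * A - A * (s * H * s⁻¹)))
          + frobNorm ((s⁻¹ * V * s) * (A * (s * Vᴴ * s⁻¹)))) + a * b * c :=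
        add_le_add (frobNorm_add_le _ _) step2
    _ ≤ (2 * Λ * c + b * (c * b)) + a * b * c := by
        have := add_le_add step1 t3
        linarith
    _ ≤ 5 * Λ * c := by nlinarith [sq_nonneg (a - b)]
end

section
/- Consider an irreducible, reversible Markov chain on a finite state space X with transition probabilities p_{ij} and stationary distribution π with π_j > 0 for all j. Then the spectral gap of the chain (1 minus the second-largest eigenvalue of the transition matrix) is bounded below by min_{i,j ∈ X} p_{ij}/π_j. -/
open Finset

/-- For a fully connected, irreducible, reversible Markov chain `p` on a
finite state space with stationary distribution `π > 0`, every eigenvalue `μ` of the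
transition matrix with eigenfunction orthogonal to constants in `ℓ²(π)` satisfies
`μ ≤ 1 − min_{i,j} p_{ij}/π_j`; i.e., the spectral gap is at least `min_{i,j} p_{ij}/π_j`. -/
theorem reversible_chain_spectral_gap_lower_bound
    {X : Type*} [Fintype X] [Nonempty X]
    (p : X → X → ℝ) (π : X → ℝ)
    (hp : ∀ i j, 0 ≤ p i j) (hstoch : ∀ i, ∑ j, p i j = 1)
    (hπpos : ∀ i, 0 < π i) (hπsum : ∑ i, π i = 1)
    (hrev : ∀ i j, π i * p i j = π j * p j i)
    (hconn : ∀ i j, i ≠ j → 0 < p i j)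
    (μ : ℝ) (v : X → ℝ) (hv : v ≠ 0)
    (horth : ∑ i, π i * v i = 0)
    (heig : ∀ i, ∑ j, p i j * v j = μ * v i) :
    μ ≤ 1 - ⨅ q : X × X, p q.1 q.2 / π q.2 := by
  set δ : ℝ := ⨅ q : X × X, p q.1 q.2 / π q.2 with hδ
  have hδle : ∀ i j, δ ≤ p i j / π j := by
    intro i j
    exact ciInf_le (Set.Finite.bddBelow (Set.finite_range _)) (i, j)
  have hq : ∀ i j, 0 ≤ p i j - δ * π j := by
    intro i j
    have := (le_div_iff₀ (hπpos j)).mp (hδle i j)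
    linarith
  -- maximizer of |v|
  obtain ⟨i0, hi0⟩ := Finite.exists_max (fun i => |v i|)
  have hM : 0 < |v i0| := by
    by_contra h
    push_neg at h
    apply hv
    funext k
    have hk := hi0 k
    have : |v k| ≤ 0 := hk.trans h
    simpa using le_antisymm this (abs_nonneg _)
  -- key identity
  have hkey : ∑ j, (p i0 j - δ * π j) * v j = μ * v i0 := by
    have : ∑ j, (p i0 j - δ * π j) * v j
        = (∑ j, p i0 j * v j) - δ * ∑ j, π j * v j := by
      rw [Finset.mul_sum, ← Finset.sum_sub_distrib]
      congr 1; funext j; ring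
    rw [this, heig, horth]; ring
  have hbound : |μ * v i0| ≤ (1 - δ) * |v i0| := by
    rw [← hkey]
    calc |∑ j, (p i0 j - δ * π j) * v j|
        ≤ ∑ j, |(p i0 j - δ * π j) * v j| := Finset.abs_sum_le_sum_abs _ _
      _ ≤ ∑ j, (p i0 j - δ * π j) * |v i0| := by
          apply Finset.sum_le_sum
          intro j _
          rw [abs_mul, abs_of_nonneg (hq i0 j)]
          exact mul_le_mul_of_nonneg_left (hi0 j) (hq i0 j)
      _ = (1 - δ) * |v i0| := by
          rw [← Finset.sum_mul, Finset.sum_sub_distrib, hstoch, ← Finset.mul_sum, hπsum]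
          ring
  have habs : |μ| ≤ 1 - δ := by
    rw [abs_mul] at hbound
    exact le_of_mul_le_mul_right hbound hM
  linarith [le_abs_self μ]
end
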